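/- arXiv:1002.1058 — 2 statements merged into one kernel-verified Lean document; each statement's English description precedes it below -/
import Mathlib

section
/- Let n ≥ 1, let Pₙ be the path graph on vertices Δ = {α₁,…,αₙ}, and let J₀ ⊆ Δ. The lattice Λ*(Pₙ,J₀) is graded with rank function U ↦ |U| (that is, whenever V covers U in Λ*(Pₙ,J₀) one has |V| = |U| + 1), and Λ*(Pₙ,J₀) is upper semimodular: for all U, V ∈ Λ*(Pₙ,J₀), |U| + |V| ≥ |U ∧ V| + |U ∨ V|. -/
open SimpleGraph Finset

/-- `ReachIn G U a b` : `b` is reachable from `a` within the subgraph of `G`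
induced on the vertex set `U`. -/
def ReachIn {n : ℕ} (G : SimpleGraph (Fin n)) (U : Finset (Fin n)) (a b : Fin n) : Prop :=
  Relation.ReflTransGen (fun x y => G.Adj x y ∧ x ∈ U ∧ y ∈ U) a b

/-- `U` is admissible (with respect to `J₀`) if no connected component of the
subgraph of `G` induced on `U` is entirely contained in `J₀`: every component
contains a vertex outside `J₀`. -/
def Admissible {n : ℕ} (G : SimpleGraph (Fin n)) (J₀ U : Finset (Fin n)) : Prop :=
  ∀ a ∈ U, ∃ b, ReachIn G U a b ∧ b ∉ J₀

/-- A subset `A` is connected if the induced subgraph on `A` is connected. -/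
def ConnIn {n : ℕ} (G : SimpleGraph (Fin n)) (A : Finset (Fin n)) : Prop :=
  ∀ a ∈ A, ∀ b ∈ A, ReachIn G A a b

theorem ReachIn.mono {n : ℕ} {G : SimpleGraph (Fin n)} {U V : Finset (Fin n)} (h : U ⊆ V)
    {a b : Fin n} (hr : ReachIn G U a b) : ReachIn G V a b :=
  by
  unfold ReachIn at *
  induction hr with
  | refl => exact Relation.ReflTransGen.refl
  | tail _ hxy ih => exact Relation.ReflTransGen.tail ih ⟨hxy.1, h hxy.2.1, h hxy.2.2⟩

theorem admissible_empty {n : ℕ} (G : SimpleGraph (Fin n)) (J₀ : Finset (Fin n)) :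
    Admissible G J₀ ∅ := fun a ha => absurd ha (Finset.notMem_empty a)

theorem admissible_union {n : ℕ} {G : SimpleGraph (Fin n)} {J₀ U V : Finset (Fin n)}
    (hU : Admissible G J₀ U) (hV : Admissible G J₀ V) : Admissible G J₀ (U ∪ V) := by
  intro a ha
  rcases Finset.mem_union.mp ha with h | h
  · obtain ⟨b, hb, hbJ⟩ := hU a h
    exact ⟨b, hb.mono Finset.subset_union_left, hbJ⟩
  · obtain ⟨b, hb, hbJ⟩ := hV a h
    exact ⟨b, hb.mono Finset.subset_union_right, hbJ⟩

/-- `Λ*(G, J₀)` : the poset of admissible subsets, ordered by inclusion. -/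
def CrossSection {n : ℕ} (G : SimpleGraph (Fin n)) (J₀ : Finset (Fin n)) : Type :=
  {U : Finset (Fin n) // Admissible G J₀ U}

namespace CrossSection

variable {n : ℕ} {G : SimpleGraph (Fin n)} {J₀ : Finset (Fin n)}

instance : PartialOrder (CrossSection G J₀) :=
  inferInstanceAs (PartialOrder {U : Finset (Fin n) // Admissible G J₀ U})

instance : DecidableEq (CrossSection G J₀) :=
  inferInstanceAs (DecidableEq {U : Finset (Fin n) // Admissible G J₀ U})

noncomputable instance : Fintype (CrossSection G J₀) :=
  Fintype.ofInjective (Subtype.val : CrossSection G J₀ → Finset (Fin n)) Subtype.val_injective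

open Classical in
/-- The underlying set of the meet of two admissible sets: the largest admissible
subset contained in the intersection. -/
noncomputable def meetFinset (G : SimpleGraph (Fin n)) (J₀ : Finset (Fin n))
    (U V : Finset (Fin n)) : Finset (Fin n) :=
  ((U ∩ V).powerset.filter (fun W => Admissible G J₀ W)).sup id

theorem admissible_sup {s : Finset (Finset (Fin n))}
    (h : ∀ W ∈ s, Admissible G J₀ W) : Admissible G J₀ (s.sup id) :=
  Finset.sup_induction (by simpa using admissible_empty G J₀)
    (fun a ha b hb => by simpa using admissible_union ha hb) h

theorem admissible_meetFinset (G : SimpleGraph (Fin n)) (J₀ U V : Finset (Fin n)) :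
    Admissible G J₀ (meetFinset G J₀ U V) := by
  classical
  exact admissible_sup (fun W hW => (Finset.mem_filter.mp hW).2)

theorem meetFinset_subset_left (G : SimpleGraph (Fin n)) (J₀ U V : Finset (Fin n)) :
    meetFinset G J₀ U V ≤ U := by
  classical
  unfold meetFinset
  refine Finset.sup_le (fun W hW => ?_)
  have := Finset.mem_powerset.mp (Finset.mem_filter.mp hW).1
  exact fun x hx => (Finset.mem_inter.mp (this hx)).1

theorem meetFinset_subset_right (G : SimpleGraph (Fin n)) (J₀ U V : Finset (Fin n)) :
    meetFinset G J₀ U V ≤ V := by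
  classical
  unfold meetFinset
  refine Finset.sup_le (fun W hW => ?_)
  have := Finset.mem_powerset.mp (Finset.mem_filter.mp hW).1
  exact fun x hx => (Finset.mem_inter.mp (this hx)).2

theorem subset_meetFinset {G : SimpleGraph (Fin n)} {J₀ U V W : Finset (Fin n)}
    (hW : Admissible G J₀ W) (h1 : W ⊆ U) (h2 : W ⊆ V) : W ≤ meetFinset G J₀ U V := by
  classical
  unfold meetFinset
  exact Finset.le_sup (f := id)
    (Finset.mem_filter.mpr ⟨Finset.mem_powerset.mpr (Finset.subset_inter h1 h2), hW⟩)

noncomputable instance : Lattice (CrossSection G J₀) :=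
  { (inferInstance : PartialOrder (CrossSection G J₀)) with
    sup := fun U V => ⟨U.1 ∪ V.1, admissible_union U.2 V.2⟩
    le_sup_left := fun U V => show U.1 ⊆ U.1 ∪ V.1 from Finset.subset_union_left
    le_sup_right := fun U V => show V.1 ⊆ U.1 ∪ V.1 from Finset.subset_union_right
    sup_le := fun U V W h1 h2 => show U.1 ∪ V.1 ⊆ W.1 from Finset.union_subset h1 h2
    inf := fun U V => ⟨meetFinset G J₀ U.1 V.1, admissible_meetFinset G J₀ U.1 V.1⟩
    inf_le_left := fun U V => meetFinset_subset_left G J₀ U.1 V.1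
    inf_le_right := fun U V => meetFinset_subset_right G J₀ U.1 V.1
    le_inf := fun W U V h1 h2 => subset_meetFinset W.2 h1 h2 }

instance : OrderBot (CrossSection G J₀) where
  bot := ⟨∅, admissible_empty G J₀⟩
  bot_le := fun U => show (∅ : Finset (Fin n)) ⊆ U.1 from Finset.empty_subset _

@[simp] theorem sup_val (U V : CrossSection G J₀) : (U ⊔ V).1 = U.1 ∪ V.1 := rfl

@[simp] theorem inf_val (U V : CrossSection G J₀) : (U ⊓ V).1 = meetFinset G J₀ U.1 V.1 := rfl

end CrossSection

theorem ReachIn.right_mem {n : ℕ} {G : SimpleGraph (Fin n)} {V : Finset (Fin n)}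
    {a b : Fin n} (hr : ReachIn G V a b) (ha : a ∈ V) : b ∈ V := by
  induction hr with
  | refl => exact ha
  | tail _ h _ => exact h.2.2

theorem adm_insert_not_mem {n : ℕ} {G : SimpleGraph (Fin n)} {J₀ U : Finset (Fin n)}
    (hU : Admissible G J₀ U) {x : Fin n} (hx : x ∉ J₀) :
    Admissible G J₀ (insert x U) := by
  intro a ha
  rcases Finset.mem_insert.mp ha with rfl | h
  · exact ⟨a, Relation.ReflTransGen.refl, hx⟩
  · obtain ⟨b, hr, hb⟩ := hU a h
    exact ⟨b, hr.mono (Finset.subset_insert _ _), hb⟩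

theorem adm_insert_adj {n : ℕ} {G : SimpleGraph (Fin n)} {J₀ U : Finset (Fin n)}
    (hU : Admissible G J₀ U) {x u : Fin n} (hu : u ∈ U) (hadj : G.Adj x u) :
    Admissible G J₀ (insert x U) := by
  intro a ha
  rcases Finset.mem_insert.mp ha with rfl | h
  · obtain ⟨b, hr, hb⟩ := hU u hu
    exact ⟨b, Relation.ReflTransGen.head
      ⟨hadj, Finset.mem_insert_self _ _, Finset.mem_insert_of_mem hu⟩
      (hr.mono (Finset.subset_insert _ _)), hb⟩
  · obtain ⟨b, hr, hb⟩ := hU a h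
    exact ⟨b, hr.mono (Finset.subset_insert _ _), hb⟩

theorem exists_boundary {n : ℕ} {G : SimpleGraph (Fin n)} {U V : Finset (Fin n)}
    {a b : Fin n} (hr : ReachIn G V a b) (ha : a ∈ V) (haU : a ∉ U) (hb : b ∈ U) :
    ∃ x ∈ V, x ∉ U ∧ ∃ u ∈ U, G.Adj x u := by
  revert ha haU
  induction hr using Relation.ReflTransGen.head_induction_on with
  | refl => exact fun _ haU => absurd hb haU
  | head h _ ih =>
    rename_i a' c _
    intro ha haU
    by_cases hc : c ∈ U
    · exact ⟨a', ha, haU, c, hc, h.1⟩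
    · exact ih h.2.2 hc

theorem exists_insert_adm {n : ℕ} {G : SimpleGraph (Fin n)} {J₀ U V : Finset (Fin n)}
    (hU : Admissible G J₀ U) (hV : Admissible G J₀ V) (hss : U ⊂ V) :
    ∃ x ∈ V, x ∉ U ∧ Admissible G J₀ (insert x U) := by
  by_cases h : ∃ x ∈ V, x ∉ U ∧ x ∉ J₀
  · obtain ⟨x, hxV, hxU, hxJ⟩ := h
    exact ⟨x, hxV, hxU, adm_insert_not_mem hU hxJ⟩
  · push_neg at h
    obtain ⟨x₀, hx₀V, hx₀U⟩ := Finset.exists_of_ssubset hss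
    obtain ⟨b, hr, hbJ⟩ := hV x₀ hx₀V
    have hbV : b ∈ V := hr.right_mem hx₀V
    have hbU : b ∈ U := by
      by_contra hbU
      exact hbJ (h b hbV hbU)
    obtain ⟨x, hxV, hxU, u, hu, hadj⟩ := exists_boundary hr hx₀V hx₀U hbU
    exact ⟨x, hxV, hxU, adm_insert_adj hU hu hadj⟩

theorem stmt_3 (n : ℕ) (hn : 1 ≤ n) (J₀ : Finset (Fin n)) :
    (∀ U V : CrossSection (pathGraph n) J₀, U ⋖ V → V.1.card = U.1.card + 1) ∧
    (∀ U V : CrossSection (pathGraph n) J₀,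
      (U ⊓ V).1.card + (U ⊔ V).1.card ≤ U.1.card + V.1.card) := by
  constructor
  · intro U V hcov
    have hlt : U.1 ⊂ V.1 := hcov.lt
    obtain ⟨x, hxV, hxU, hadm⟩ := exists_insert_adm U.2 V.2 hlt
    set W : CrossSection (pathGraph n) J₀ := ⟨insert x U.1, hadm⟩ with hW
    have hUW : U < W := show U.1 ⊂ insert x U.1 from Finset.ssubset_insert hxU
    have hWV : W ≤ V := show insert x U.1 ⊆ V.1 from Finset.insert_subset hxV hlt.subset
    have hWeqV : W = V := (lt_or_eq_of_le hWV).resolve_left (hcov.2 hUW)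
    rw [← hWeqV]
    exact Finset.card_insert_of_notMem hxU
  · intro U V
    have h1 : (U ⊓ V).1 ⊆ U.1 ∩ V.1 :=
      Finset.subset_inter (CrossSection.meetFinset_subset_left _ _ _ _)
        (CrossSection.meetFinset_subset_right _ _ _ _)
    calc (U ⊓ V).1.card + (U ⊔ V).1.card
        ≤ (U.1 ∩ V.1).card + (U.1 ∪ V.1).card := by
          exact Nat.add_le_add (Finset.card_le_card h1) (le_of_eq rfl)
      _ = U.1.card + V.1.card := Finset.card_inter_add_card_union _ _
end

section
/- Let n ≥ 1, let Pₙ be the path graph on vertices Δ = {α₁,…,αₙ}, and let J₀ ⊆ Δ. If X ∈ Λ*(Pₙ,J₀) is an admissible subset with X ∩ J₀ = ∅, then X is both a right modular and a left modular element of the lattice Λ*(Pₙ,J₀): for all U, V ∈ Λ*(Pₙ,J₀), V ≤ X implies V ∨ (U ∧ X) = (V ∨ U) ∧ X, and U ≤ V implies U ∨ (X ∧ V) = (U ∨ X) ∧ V. -/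
open SimpleGraph Finset

theorem stmt_14 (n : ℕ) (hn : 1 ≤ n) (J₀ : Finset (Fin n))
    (X : CrossSection (pathGraph n) J₀) (hX : X.1 ∩ J₀ = ∅) :
    (∀ U V : CrossSection (pathGraph n) J₀, V ≤ X → V ⊔ (U ⊓ X) = (V ⊔ U) ⊓ X) ∧
    (∀ U V : CrossSection (pathGraph n) J₀, U ≤ V → U ⊔ (X ⊓ V) = (U ⊔ X) ⊓ V) := by
  have hadm : ∀ W : Finset (Fin n), W ⊆ X.1 → Admissible (pathGraph n) J₀ W := by
    intro W hW a ha
    refine ⟨a, Relation.ReflTransGen.refl, fun haJ => ?_⟩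
    have : a ∈ X.1 ∩ J₀ := Finset.mem_inter.mpr ⟨hW ha, haJ⟩
    simp [hX] at this
  have hmeet : ∀ U V : Finset (Fin n), Admissible (pathGraph n) J₀ (U ∩ V) →
      CrossSection.meetFinset (pathGraph n) J₀ U V = U ∩ V := by
    intro U V h
    refine le_antisymm (Finset.subset_inter (CrossSection.meetFinset_subset_left _ _ _ _)
      (CrossSection.meetFinset_subset_right _ _ _ _)) ?_
    exact CrossSection.subset_meetFinset h Finset.inter_subset_left Finset.inter_subset_right
  constructor
  · intro U V hVX
    apply Subtype.ext
    show V.1 ∪ CrossSection.meetFinset (pathGraph n) J₀ U.1 X.1 =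
      CrossSection.meetFinset (pathGraph n) J₀ (V.1 ∪ U.1) X.1
    rw [hmeet U.1 X.1 (hadm _ Finset.inter_subset_right),
      hmeet (V.1 ∪ U.1) X.1 (hadm _ Finset.inter_subset_right)]
    have hVX' : V.1 ⊆ X.1 := hVX
    ext a
    simp only [Finset.mem_union, Finset.mem_inter]
    constructor
    · rintro (h | ⟨h1, h2⟩)
      exacts [⟨Or.inl h, hVX' h⟩, ⟨Or.inr h1, h2⟩]
    · rintro ⟨h1 | h1, h2⟩
      exacts [Or.inl h1, Or.inr ⟨h1, h2⟩]
  · intro U V hUV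
    apply Subtype.ext
    show U.1 ∪ CrossSection.meetFinset (pathGraph n) J₀ X.1 V.1 =
      CrossSection.meetFinset (pathGraph n) J₀ (U.1 ∪ X.1) V.1
    have h1 : Admissible (pathGraph n) J₀ (X.1 ∩ V.1) := hadm _ Finset.inter_subset_left
    have hUV' : U.1 ⊆ V.1 := hUV
    have heq : (U.1 ∪ X.1) ∩ V.1 = U.1 ∪ X.1 ∩ V.1 := by
      ext a
      simp only [Finset.mem_union, Finset.mem_inter]
      constructor
      · rintro ⟨h1 | h1, h2⟩
        exacts [Or.inl h1, Or.inr ⟨h1, h2⟩]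
      · rintro (h | ⟨ha, hb⟩)
        exacts [⟨Or.inl h, hUV' h⟩, ⟨Or.inr ha, hb⟩]
    rw [hmeet X.1 V.1 h1, hmeet (U.1 ∪ X.1) V.1 (heq ▸ admissible_union U.2 h1), heq]
end
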